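/- arXiv:1701.06678 — 3 statements merged into one kernel-verified Lean document; each statement's English description precedes it below -/
import Mathlib

section
/- Generalized Fano inequality: for a variable-length coding scheme with message W uniform on {1,...,M}, posterior entropy H_t = H(W | F_t), an almost surely finite stopping time T, and decoder output Ŵ measurable with respect to F_T, the expected stopping-time entropy satisfies E[H_T] ≤ h(P_e) + P_e · log(M−1), where P_e = P(Ŵ ≠ W) and h is the binary entropy function. -/
open MeasureTheory Filter


lemma negMulLog_le_one {x : ℝ} (h0 : 0 ≤ x) (h1 : x ≤ 1) : Real.negMulLog x ≤ 1 := by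
  rcases eq_or_lt_of_le h0 with h | h
  · simp [← h]
  · have := Real.log_le_sub_one_of_pos (x := x⁻¹) (by positivity)
    have hlog : Real.log x = - Real.log x⁻¹ := by rw [Real.log_inv]; ring
    rw [Real.negMulLog, hlog]
    calc -x * -Real.log x⁻¹ = x * Real.log x⁻¹ := by ring
    _ ≤ x * (x⁻¹ - 1) := by
        apply mul_le_mul_of_nonneg_left this h0
    _ = 1 - x := by field_simp
    _ ≤ 1 := by linarith

lemma fano_aux {M : ℕ} (hM : 2 ≤ M) (p : Fin M → ℝ) (h0 : ∀ i, 0 ≤ p i)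
    (h1 : ∑ i, p i = 1) (j : Fin M) :
    -∑ i, p i * Real.log (p i) ≤
      (Real.negMulLog (p j) + Real.negMulLog (1 - p j)) + (1 - p j) * Real.log (M - 1) := by
  classical
  set s : Finset (Fin M) := Finset.univ.erase j with hs
  have hcard : (s.card : ℝ) = (M : ℝ) - 1 := by
    simp [hs, Finset.card_erase_of_mem, Finset.card_univ]
    have : 1 ≤ M := by omega
    push_cast [Nat.cast_sub this]
    ring
  set n : ℝ := (M : ℝ) - 1 with hn
  have hnpos : 0 < n := by
    have : (2:ℝ) ≤ M := by exact_mod_cast hM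
    simp [hn]; linarith
  have hsum : ∑ i ∈ s, p i = 1 - p j := by
    have := Finset.add_sum_erase Finset.univ p (Finset.mem_univ j)
    rw [h1] at this; linarith
  have hjensen := Real.concaveOn_negMulLog.le_map_sum (t := s) (w := fun _ => n⁻¹)
    (p := p) (fun i _ => by positivity)
    (by simp [Finset.sum_const, hcard]; field_simp)
    (fun i _ => Set.mem_Ici.2 (h0 i))
  have key : ∑ i ∈ s, Real.negMulLog (p i) ≤ Real.negMulLog (1 - p j) + (1 - p j) * Real.log n := by
    have h2 : ∑ i ∈ s, n⁻¹ • p i = (1 - p j) * n⁻¹ := by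
      simp only [smul_eq_mul]
      rw [← Finset.mul_sum, hsum]; ring
    rw [h2] at hjensen
    have h3 : Real.negMulLog ((1 - p j) * n⁻¹)
        = n⁻¹ * Real.negMulLog (1 - p j) + (1 - p j) * Real.negMulLog n⁻¹ :=
      Real.negMulLog_mul _ _
    have h4 : Real.negMulLog n⁻¹ = n⁻¹ * Real.log n := by
      rw [Real.negMulLog, Real.log_inv]; ring
    have h5 : ∑ i ∈ s, n⁻¹ • Real.negMulLog (p i) = n⁻¹ * ∑ i ∈ s, Real.negMulLog (p i) := by
      simp [smul_eq_mul, Finset.mul_sum]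
    rw [h5, h3, h4] at hjensen
    have hn0 : n⁻¹ > 0 := by positivity
    nlinarith [hjensen]
  have hsplit : -∑ i, p i * Real.log (p i) = Real.negMulLog (p j) + ∑ i ∈ s, Real.negMulLog (p i) := by
    have : ∀ i, -(p i * Real.log (p i)) = Real.negMulLog (p i) := fun i => by
      rw [Real.negMulLog]; ring
    rw [← Finset.sum_neg_distrib]
    simp_rw [this]
    exact (Finset.add_sum_erase Finset.univ _ (Finset.mem_univ j)).symm
  rw [hsplit]
  linarith [key]

noncomputable def hbin (x : ℝ) : ℝ := Real.negMulLog x + Real.negMulLog (1 - x)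

lemma concave_hbin : ConcaveOn ℝ (Set.Icc (0:ℝ) 1) hbin := by
  have h1 : ConcaveOn ℝ (Set.Icc (0:ℝ) 1) Real.negMulLog :=
    Real.concaveOn_negMulLog.subset (fun x hx => hx.1) (convex_Icc 0 1)
  have h2 : ConcaveOn ℝ (Set.Icc (0:ℝ) 1) (fun x => Real.negMulLog (1 - x)) := by
    constructor
    · exact convex_Icc 0 1
    · intro x hx y hy a b ha hb hab
      have := h1.2 (x := 1 - x) (y := 1 - y)
        ⟨by linarith [hx.2], by linarith [hx.1]⟩ ⟨by linarith [hy.2], by linarith [hy.1]⟩ ha hb hab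
      simp only [smul_eq_mul] at this ⊢
      calc a * Real.negMulLog (1-x) + b * Real.negMulLog (1-y)
          ≤ Real.negMulLog (a * (1-x) + b * (1-y)) := this
        _ = Real.negMulLog (1 - (a * x + b * y)) := by
              congr 1; linarith [hab]
  exact h1.add h2

lemma continuous_hbin : Continuous hbin :=
  Real.continuous_negMulLog.add (Real.continuous_negMulLog.comp (by continuity))

lemma hbin_bounded {x : ℝ} (hx : x ∈ Set.Icc (0:ℝ) 1) : ‖hbin x‖ ≤ 2 := by
  have h1 : 0 ≤ Real.negMulLog x := Real.negMulLog_nonneg hx.1 hx.2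
  have h2 : 0 ≤ Real.negMulLog (1-x) := Real.negMulLog_nonneg (by linarith [hx.2]) (by linarith [hx.1])
  have h3 : Real.negMulLog x ≤ 1 := negMulLog_le_one hx.1 hx.2
  have h4 : Real.negMulLog (1-x) ≤ 1 := negMulLog_le_one (by linarith [hx.2]) (by linarith [hx.1])
  rw [Real.norm_eq_abs, abs_le]; constructor <;> simp [hbin] <;> linarith
/-- Generalized Fano inequality: `E[H_T] ≤ h(P_e) + P_e log(M-1)`. -/
theorem stmt1 {Ω : Type*} {m0 : MeasurableSpace Ω} {P : Measure Ω} [IsProbabilityMeasure P]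
    (ℱ : Filtration ℕ m0) (M : ℕ) (hM : 2 ≤ M)
    (W : Ω → Fin M) (hW : Measurable W)
    (hunif : ∀ i : Fin M, P {ω | W ω = i} = 1 / M)
    (T : Ω → ℕ) (hT : IsStoppingTime ℱ (fun ω => (T ω : WithTop ℕ)))
    (Pi : ℕ → Fin M → Ω → ℝ)
    (hPi : ∀ t i, Pi t i =ᵐ[P] P[Set.indicator {ω | W ω = i} (fun _ => (1 : ℝ)) | ℱ t])
    (H : ℕ → Ω → ℝ)
    (hH : ∀ t ω, H t ω = -∑ i : Fin M, Pi t i ω * Real.log (Pi t i ω))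
    (What : Ω → Fin M) (hWhat : Measurable[hT.measurableSpace] What)
    (Pe : ℝ) (hPe : Pe = (P {ω | What ω ≠ W ω}).toReal) :
    ∫ ω, H (T ω) ω ∂P ≤
      (-(Pe * Real.log Pe) - (1 - Pe) * Real.log (1 - Pe)) + Pe * Real.log (M - 1) := by
  classical
  set Q : ℕ → Fin M → Ω → ℝ :=
    fun t i => P[Set.indicator {ω | W ω = i} (fun _ => (1 : ℝ)) | ℱ t] with hQdef
  -- measurability basics
  have hWset : ∀ i : Fin M, MeasurableSet {ω | W ω = i} := fun i => hW (measurableSet_singleton i)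
  have hInd_int : ∀ i : Fin M,
      Integrable (Set.indicator {ω | W ω = i} (fun _ => (1 : ℝ))) P :=
    fun i => (integrable_const (1 : ℝ)).indicator (hWset i)
  have hQmeas : ∀ t i, Measurable (Q t i) := fun t i =>
    (stronglyMeasurable_condExp.mono (ℱ.le t)).measurable
  have hTmeas : Measurable T := by
    apply measurable_to_countable'
    intro t
    convert ℱ.le t _ (hT.measurableSet_eq_of_countable t) using 1
    ext ω; simp
  have hWhatm0 : Measurable What := hWhat.mono hT.measurableSpace_le le_rfl
  set Qhat : Ω → ℝ := fun ω => Q (T ω) (What ω) ω with hQhatdef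
  have hQhatMeas : Measurable Qhat := by
    have h1 : Measurable fun q : Ω × (ℕ × Fin M) => Q q.2.1 q.2.2 q.1 :=
      measurable_from_prod_countable_left (fun y => hQmeas y.1 y.2)
    exact h1.comp (measurable_id.prodMk (hTmeas.prodMk hWhatm0))
  set G : ℕ → Ω → ℝ := fun t ω => ∑ i, Real.negMulLog (Q t i ω) with hGdef
  have hGTmeas : Measurable fun ω => G (T ω) ω := by
    have h1 : Measurable fun q : Ω × ℕ => G q.2 q.1 := by
      apply measurable_from_prod_countable_left
      intro t
      exact Finset.measurable_sum _ fun i _ =>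
        Real.continuous_negMulLog.measurable.comp (hQmeas t i)
    exact h1.comp (measurable_id.prodMk hTmeas)
  set E : Ω → ℝ := fun ω => 1 - Qhat ω with hEdef
  have hEmeas : Measurable E := measurable_const.sub hQhatMeas
  -- the a.e. good event
  have haegood : ∀ᵐ ω ∂P, ∀ t, (∀ i, 0 ≤ Q t i ω) ∧ (∑ i, Q t i ω = 1) ∧
      (∀ i, Pi t i ω = Q t i ω) := by
    rw [ae_all_iff]
    intro t
    have h0 : ∀ᵐ ω ∂P, ∀ i, 0 ≤ Q t i ω := by
      rw [ae_all_iff]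
      intro i
      exact condExp_nonneg (Eventually.of_forall fun ω =>
        Set.indicator_nonneg (fun _ _ => zero_le_one) ω)
    have hPiQ : ∀ᵐ ω ∂P, ∀ i, Pi t i ω = Q t i ω := by
      rw [ae_all_iff]; intro i; exact hPi t i
    have hsum : ∀ᵐ ω ∂P, ∑ i, Q t i ω = 1 := by
      have h1 : P[∑ i : Fin M, Set.indicator {ω | W ω = i} (fun _ => (1 : ℝ)) | ℱ t]
          =ᵐ[P] ∑ i : Fin M, Q t i :=
        condExp_finsetSum (fun i _ => hInd_int i) (ℱ t)
      have h2 : (∑ i : Fin M, Set.indicator {ω | W ω = i} (fun _ => (1 : ℝ)))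
          = fun _ => (1 : ℝ) := by
        funext ω
        rw [Finset.sum_apply]
        rw [Finset.sum_eq_single (W ω)]
        · simp [Set.indicator_of_mem]
        · intro i _ hi
          apply Set.indicator_of_notMem
          simp [Ne.symm hi]
        · simp
      rw [h2] at h1
      rw [condExp_const (ℱ.le t) (1 : ℝ) (μ := P)] at h1
      filter_upwards [h1] with ω hω
      simpa [Finset.sum_apply] using hω.symm
    filter_upwards [h0, hPiQ, hsum] with ω a b c using ⟨a, c, b⟩
  -- pointwise consequences
  have haeE : ∀ᵐ ω ∂P, E ω ∈ Set.Icc (0:ℝ) 1 := by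
    filter_upwards [haegood] with ω hω
    obtain ⟨h0, h1, -⟩ := hω (T ω)
    have hle : Q (T ω) (What ω) ω ≤ 1 := by
      rw [← h1]
      exact Finset.single_le_sum (fun i _ => h0 i) (Finset.mem_univ _)
    exact ⟨by simpa [hEdef] using hle, by simpa [hEdef] using h0 (What ω)⟩
  have haeHG : (fun ω => H (T ω) ω) =ᵐ[P] fun ω => G (T ω) ω := by
    filter_upwards [haegood] with ω hω
    obtain ⟨-, -, hpq⟩ := hω (T ω)
    rw [hH]
    simp only [hGdef]
    rw [← Finset.sum_neg_distrib]
    congr 1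
    funext i
    rw [hpq i, Real.negMulLog]
    ring
  have haekey : ∀ᵐ ω ∂P,
      G (T ω) ω ≤ hbin (E ω) + E ω * Real.log ((M:ℝ) - 1) := by
    filter_upwards [haegood] with ω hω
    obtain ⟨h0, h1, -⟩ := hω (T ω)
    have := fano_aux hM (fun i => Q (T ω) i ω) h0 h1 (What ω)
    have hGp : G (T ω) ω = -∑ i, Q (T ω) i ω * Real.log (Q (T ω) i ω) := by
      simp only [hGdef]
      rw [← Finset.sum_neg_distrib]
      congr 1; funext i; rw [Real.negMulLog]; ring
    rw [hGp]
    have hEeq : E ω = 1 - Q (T ω) (What ω) ω := rfl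
    calc -∑ i, Q (T ω) i ω * Real.log (Q (T ω) i ω)
        ≤ (Real.negMulLog (Q (T ω) (What ω) ω) + Real.negMulLog (1 - Q (T ω) (What ω) ω))
          + (1 - Q (T ω) (What ω) ω) * Real.log ((M:ℝ) - 1) := this
      _ = hbin (E ω) + E ω * Real.log ((M:ℝ) - 1) := by
          rw [hEeq, hbin]; ring_nf
  -- integrability
  have haeGT_bd : ∀ᵐ ω ∂P, ‖G (T ω) ω‖ ≤ (M : ℝ) := by
    filter_upwards [haegood] with ω hω
    obtain ⟨h0, h1, -⟩ := hω (T ω)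
    have hle : ∀ i, Q (T ω) i ω ≤ 1 := fun i => by
      rw [← h1]; exact Finset.single_le_sum (fun i _ => h0 i) (Finset.mem_univ _)
    have hnn : ∀ i, 0 ≤ Real.negMulLog (Q (T ω) i ω) := fun i =>
      Real.negMulLog_nonneg (h0 i) (hle i)
    have hub : ∀ i, Real.negMulLog (Q (T ω) i ω) ≤ 1 := fun i =>
      negMulLog_le_one (h0 i) (hle i)
    rw [Real.norm_eq_abs, abs_le]
    constructor
    · have : (0:ℝ) ≤ G (T ω) ω := Finset.sum_nonneg fun i _ => hnn i
      have hM' : (0:ℝ) ≤ M := by positivity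
      linarith
    · calc G (T ω) ω ≤ ∑ _i : Fin M, (1:ℝ) :=
            Finset.sum_le_sum fun i _ => hub i
        _ = M := by simp
  have hGT_int : Integrable (fun ω => G (T ω) ω) P :=
    (integrable_const (M:ℝ)).mono' hGTmeas.aestronglyMeasurable haeGT_bd
  have hE_int : Integrable E P := by
    apply (integrable_const (1:ℝ)).mono' hEmeas.aestronglyMeasurable
    filter_upwards [haeE] with ω hω
    rw [Real.norm_eq_abs, abs_le]
    exact ⟨by linarith [hω.1], hω.2⟩
  have hbinE_int : Integrable (fun ω => hbin (E ω)) P := by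
    apply (integrable_const (2:ℝ)).mono'
      (continuous_hbin.measurable.comp hEmeas).aestronglyMeasurable
    filter_upwards [haeE] with ω hω
    exact hbin_bounded hω
  have hQhat_int : Integrable Qhat P := by
    apply (integrable_const (1:ℝ)).mono' hQhatMeas.aestronglyMeasurable
    filter_upwards [haeE] with ω hω
    rw [Real.norm_eq_abs, abs_le]
    constructor
    · have := hω.2; simp only [hEdef] at this; linarith
    · have := hω.1; simp only [hEdef, Set.mem_Icc] at this ⊢; linarith
  -- the key integral identity : ∫ Qhat = P (What = W)
  have hQhat_integral : ∫ ω, Qhat ω ∂P = (P {ω | What ω = W ω}).toReal := by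
    set s : ℕ × Fin M → Set Ω := fun q => {ω | T ω = q.1} ∩ {ω | What ω = q.2} with hsdef
    have hsm : ∀ q, MeasurableSet (s q) := fun q =>
      (hTmeas (measurableSet_singleton q.1)).inter (hWhatm0 (measurableSet_singleton q.2))
    have hsd : Pairwise (Function.onFun Disjoint s) := by
      intro q q' hqq'
      rw [Function.onFun, Set.disjoint_left]
      rintro ω ⟨h1, h2⟩ ⟨h3, h4⟩
      exact hqq' (Prod.ext ((show T ω = q.1 from h1).symm.trans h3)
        ((show What ω = q.2 from h2).symm.trans h4))
    have hsu : (⋃ q, s q) = Set.univ := by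
      ext ω
      simp only [Set.mem_iUnion, Set.mem_univ, iff_true]
      exact ⟨(T ω, What ω), rfl, rfl⟩
    have h1 : ∫ ω, Qhat ω ∂P = ∑' q, ∫ ω in s q, Qhat ω ∂P := by
      rw [← setIntegral_univ, ← hsu, integral_iUnion hsm hsd hQhat_int.integrableOn]
    have h2 : ∀ q : ℕ × Fin M, ∫ ω in s q, Qhat ω ∂P
        = (P (s q ∩ {ω | W ω = q.2})).toReal := by
      intro q
      have ha : ∫ ω in s q, Qhat ω ∂P = ∫ ω in s q, Q q.1 q.2 ω ∂P := by
        apply setIntegral_congr_fun (hsm q)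
        rintro ω ⟨h1, h2⟩
        simp only [hQhatdef]
        rw [show T ω = q.1 from h1, show What ω = q.2 from h2]
      have hsF : MeasurableSet[ℱ q.1] (s q) := by
        have hWm : MeasurableSet[hT.measurableSpace] {ω | What ω = q.2} :=
          hWhat (measurableSet_singleton q.2)
        have h3 : MeasurableSet[hT.measurableSpace]
            ({ω | What ω = q.2} ∩ {ω | (T ω : WithTop ℕ) = q.1}) :=
          hWm.inter (hT.measurableSet_eq_of_countable' q.1)
        have h4 := (hT.measurableSet_inter_eq_iff {ω | What ω = q.2} q.1).mp h3
        have hseq : s q = {ω | What ω = q.2} ∩ {ω | T ω = q.1} := by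
          rw [hsdef]
          ext ω
          simp only [Set.mem_inter_iff, Set.mem_setOf_eq]
          exact and_comm
        rw [hseq]
        simpa using h4
      rw [ha, setIntegral_condExp (ℱ.le q.1) (hInd_int q.2) hsF,
        setIntegral_indicator (hWset q.2), setIntegral_const]
      simp
      rfl
    have h3 : (P {ω | What ω = W ω}).toReal
        = ∑' q, (P (s q ∩ {ω | W ω = q.2})).toReal := by
      have hdisj : Pairwise (Function.onFun Disjoint fun q : ℕ × Fin M => s q ∩ {ω | W ω = q.2}) :=
        fun q q' h => ((hsd h).mono Set.inter_subset_left Set.inter_subset_left)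
      have hmeas : ∀ q : ℕ × Fin M, MeasurableSet (s q ∩ {ω | W ω = q.2}) :=
        fun q => (hsm q).inter (hWset q.2)
      have hun : (⋃ q, (s q ∩ {ω | W ω = q.2})) = {ω | What ω = W ω} := by
        ext ω
        simp only [Set.mem_iUnion, Set.mem_inter_iff, Set.mem_setOf_eq]
        constructor
        · rintro ⟨q, ⟨⟨-, h2⟩, h3⟩⟩
          rw [show What ω = q.2 from h2, h3]
        · intro h
          exact ⟨(T ω, What ω), ⟨⟨rfl, rfl⟩, h.symm⟩⟩
      rw [← hun, measure_iUnion hdisj hmeas,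
        ENNReal.tsum_toReal_eq (fun q => measure_ne_top _ _)]
    rw [h1, h3]
    exact tsum_congr h2
  have hE_integral : ∫ ω, E ω ∂P = Pe := by
    have hcompl : {ω | What ω ≠ W ω} = {ω | What ω = W ω}ᶜ := by
      ext ω; simp [Set.mem_compl_iff]
    have hmeq : MeasurableSet {ω | What ω = W ω} := by
      have heq : {ω | What ω = W ω} = ⋃ j, ({ω | What ω = j} ∩ {ω | W ω = j}) := by
        ext ω
        simp only [Set.mem_setOf_eq, Set.mem_iUnion, Set.mem_inter_iff]
        constructor
        · intro h; exact ⟨W ω, h, rfl⟩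
        · rintro ⟨j, h1, h2⟩; rw [h1, h2]
      rw [heq]
      exact MeasurableSet.iUnion fun j =>
        (hWhatm0 (measurableSet_singleton j)).inter (hWset j)
    have h1 : (P {ω | What ω ≠ W ω}).toReal = 1 - (P {ω | What ω = W ω}).toReal := by
      rw [hcompl, measure_compl hmeq (measure_ne_top _ _), measure_univ]
      rw [ENNReal.toReal_sub_of_le prob_le_one ENNReal.one_ne_top, ENNReal.toReal_one]
    rw [hPe, h1]
    rw [← hQhat_integral]
    rw [hEdef]
    rw [integral_sub (integrable_const 1) hQhat_int]
    simp
  -- putting it together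
  have step1 : ∫ ω, H (T ω) ω ∂P = ∫ ω, G (T ω) ω ∂P := integral_congr_ae haeHG
  have step2 : ∫ ω, G (T ω) ω ∂P ≤
      ∫ ω, (hbin (E ω) + E ω * Real.log ((M:ℝ) - 1)) ∂P := by
    apply integral_mono_ae hGT_int
    · exact hbinE_int.add (hE_int.mul_const _)
    · exact haekey
  have step3 : ∫ ω, (hbin (E ω) + E ω * Real.log ((M:ℝ) - 1)) ∂P
      = ∫ ω, hbin (E ω) ∂P + Pe * Real.log ((M:ℝ) - 1) := by
    rw [integral_add hbinE_int (hE_int.mul_const _), integral_mul_const, hE_integral]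
  have step4 : ∫ ω, hbin (E ω) ∂P ≤ hbin Pe := by
    have := concave_hbin.le_map_integral continuous_hbin.continuousOn isClosed_Icc
      haeE hE_int hbinE_int
    rwa [hE_integral] at this
  have hfinal : hbin Pe = -(Pe * Real.log Pe) - (1 - Pe) * Real.log (1 - Pe) := by
    rw [hbin, Real.negMulLog, Real.negMulLog]; ring
  rw [step1]
  calc ∫ ω, G (T ω) ω ∂P ≤ ∫ ω, hbin (E ω) ∂P + Pe * Real.log ((M:ℝ) - 1) := by
        rw [← step3]; exact step2
    _ ≤ hbin Pe + Pe * Real.log ((M:ℝ) - 1) := by linarith [step4]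
    _ = (-(Pe * Real.log Pe) - (1 - Pe) * Real.log (1 - Pe)) + Pe * Real.log ((M:ℝ) - 1) := by
        rw [hfinal]
end

section
/- Let K_1, K_2, K_3, H* be positive reals with K_2 > K_1, and λ > 0. Define f(y) = (1 − e^{λy})/(K_2 λ). Then for all sufficiently small λ > 0, the following four inequalities hold simultaneously: (i) (H*/K_1)(e^y − 1) < y/K_2 + f(y) for all y ∈ (−K_3, 0); (ii) (H*/K_1)(e^y − 1) > y/K_2 + f(y) for all y ∈ (0, K_3); (iii) 1/K_2 + f'(y) > 0 for all y ∈ (−K_3, 0); (iv) 1 − (λ e^{λ K_3}/(2K_2)) K_3² > 0. -/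
open Real

lemma exp_le_quad {x : ℝ} (hx : x ≤ 0) : Real.exp x ≤ 1 + x + x ^ 2 / 2 := by
  have h : MonotoneOn (fun x : ℝ => Real.exp x - (1 + x + x ^ 2 / 2)) (Set.Iic 0) := by
    have hd : ∀ x : ℝ, HasDerivAt (fun x : ℝ => Real.exp x - (1 + x + x ^ 2 / 2))
        (Real.exp x - (1 + x)) x := by
      intro x
      have h1 : HasDerivAt (fun x : ℝ => 1 + x + x ^ 2 / 2) (0 + 1 + 2 * x / 2) x := by
        exact (((hasDerivAt_const x (1:ℝ)).add (hasDerivAt_id x)).add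
          (((hasDerivAt_pow 2 x)).div_const 2)).congr_deriv (by ring)
      have := (Real.hasDerivAt_exp x).sub h1
      exact this.congr_deriv (by ring)
    apply monotoneOn_of_deriv_nonneg (convex_Iic 0)
    · exact (Continuous.continuousOn (by continuity))
    · intro x _; exact (hd x).differentiableAt.differentiableWithinAt
    · intro x _
      rw [(hd x).deriv]
      have := Real.add_one_le_exp x
      linarith
  have := h (Set.mem_Iic.2 hx) (Set.mem_Iic.2 le_rfl) hx
  simp at this
  linarith

set_option maxHeartbeats 1000000 in
/-- For all sufficiently small `λ > 0`, the four inequalities used in the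
submartingale construction hold simultaneously, where `f y = (1 - e^{λ y})/(K₂ λ)`. -/
theorem stmt4 (K₁ K₂ K₃ Hstar : ℝ) (hK₁ : 0 < K₁) (hK₂ : 0 < K₂) (hK₃ : 0 < K₃)
    (hHs : 0 < Hstar) (hK : K₁ < K₂) :
    ∃ lam₀ > 0, ∀ lam : ℝ, 0 < lam → lam ≤ lam₀ →
      (∀ y : ℝ, -K₃ < y → y < 0 →
          Hstar / K₁ * (exp y - 1) < y / K₂ + (1 - exp (lam * y)) / (K₂ * lam)) ∧
      (∀ y : ℝ, 0 < y → y < K₃ →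
          Hstar / K₁ * (exp y - 1) > y / K₂ + (1 - exp (lam * y)) / (K₂ * lam)) ∧
      (∀ y : ℝ, -K₃ < y → y < 0 →
          0 < 1 / K₂ + deriv (fun z => (1 - exp (lam * z)) / (K₂ * lam)) y) ∧
      (0 < 1 - lam * exp (lam * K₃) / (2 * K₂) * K₃ ^ 2) := by
  set c : ℝ := Hstar * Real.exp (-K₃) / K₁ with hc
  have hcpos : 0 < c := by positivity
  refine ⟨min 1 (min (2 * K₂ * c / K₃) (K₂ / (Real.exp K₃ * K₃ ^ 2))), by positivity,
    fun lam hlam hlam₀ => ?_⟩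
  have hlam1 : lam ≤ 1 := le_trans hlam₀ (min_le_left _ _)
  have hlam2 : lam ≤ 2 * K₂ * c / K₃ :=
    le_trans hlam₀ (le_trans (min_le_right _ _) (min_le_left _ _))
  have hlam3 : lam ≤ K₂ / (Real.exp K₃ * K₃ ^ 2) :=
    le_trans hlam₀ (le_trans (min_le_right _ _) (min_le_right _ _))
  refine ⟨?_, ?_, ?_, ?_⟩
  · -- (i)
    intro y hy1 hy2
    have hey : Real.exp (-K₃) ≤ Real.exp y := Real.exp_le_exp.2 (le_of_lt hy1)
    -- LHS < c * y
    have hA : Real.exp y - 1 < y * Real.exp y := by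
      have h := Real.add_one_lt_exp (x := -y) (by linarith)
      have hpos : 0 < Real.exp y := Real.exp_pos y
      have : (-y + 1) * Real.exp y < Real.exp (-y) * Real.exp y := by
        exact mul_lt_mul_of_pos_right h hpos
      rw [← Real.exp_add] at this
      simp at this
      nlinarith
    have hB : y * Real.exp y ≤ y * Real.exp (-K₃) :=
      mul_le_mul_of_nonpos_left hey (le_of_lt hy2)
    have hLHS : Hstar / K₁ * (Real.exp y - 1) < c * y := by
      have h1 : Hstar / K₁ * (Real.exp y - 1) < Hstar / K₁ * (y * Real.exp (-K₃)) := by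
        apply mul_lt_mul_of_pos_left _ (by positivity)
        linarith
      have : Hstar / K₁ * (y * Real.exp (-K₃)) = c * y := by rw [hc]; ring
      linarith
    -- RHS ≥ lam*K₃*y/(2K₂) ≥ c*y
    have hquad : Real.exp (lam * y) ≤ 1 + lam * y + (lam * y) ^ 2 / 2 :=
      exp_le_quad (by nlinarith)
    have hy2' : y ^ 2 ≤ -K₃ * y := by nlinarith
    have hRHS : lam * K₃ * y / (2 * K₂) ≤ y / K₂ + (1 - Real.exp (lam * y)) / (K₂ * lam) := by
      rw [div_add_div _ _ (ne_of_gt hK₂) (ne_of_gt (by positivity : (0:ℝ) < K₂ * lam)),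
        div_le_div_iff₀ (by positivity) (by positivity)]
      nlinarith [mul_le_mul_of_nonneg_left hquad (by positivity : (0:ℝ) ≤ 2*K₂^2*lam),
        mul_le_mul_of_nonneg_left hy2' (by positivity : (0:ℝ) ≤ lam^2*K₂^2)]
    have hcy : c * y ≤ lam * K₃ * y / (2 * K₂) := by
      rw [le_div_iff₀ (by positivity)] at hlam2
      have : lam * K₃ ≤ 2 * K₂ * c := by nlinarith
      rw [le_div_iff₀ (by positivity)]
      nlinarith
    linarith
  · -- (ii)
    intro y hy1 hy2
    have h1 : lam * y + 1 ≤ Real.exp (lam * y) := Real.add_one_le_exp _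
    have h2 : (1 - Real.exp (lam * y)) / (K₂ * lam) ≤ -y / K₂ := by
      rw [div_le_div_iff₀ (by positivity) hK₂]
      nlinarith
    have h3 : 1 < Real.exp y := by
      rw [← Real.exp_zero]; exact Real.exp_lt_exp.2 hy1
    have h4 : 0 < Hstar / K₁ * (Real.exp y - 1) := by
      apply mul_pos (by positivity); linarith
    have : y / K₂ + (1 - Real.exp (lam * y)) / (K₂ * lam) ≤ 0 := by
      have : y / K₂ + -y / K₂ = 0 := by ring
      linarith
    linarith
  · -- (iii)
    intro y hy1 hy2
    have hd : HasDerivAt (fun z => (1 - Real.exp (lam * z)) / (K₂ * lam))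
        (-Real.exp (lam * y) / K₂) y := by
      have h1 : HasDerivAt (fun z : ℝ => lam * z) lam y := by
        simpa using (hasDerivAt_id y).const_mul lam
      have h2 := (((hasDerivAt_const y (1:ℝ)).sub h1.exp)).div_const (K₂ * lam)
      refine h2.congr_deriv ?_
      field_simp
      ring
    rw [hd.deriv]
    have hexp : Real.exp (lam * y) < 1 := by
      rw [← Real.exp_zero]; exact Real.exp_lt_exp.2 (by nlinarith)
    have heq : 1 / K₂ + -Real.exp (lam * y) / K₂ = (1 - Real.exp (lam * y)) / K₂ := by
      ring
    rw [heq]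
    exact div_pos (by linarith) hK₂
  · -- (iv)
    have h1 : Real.exp (lam * K₃) ≤ Real.exp K₃ := Real.exp_le_exp.2 (by nlinarith)
    have hlam3' : lam * (Real.exp K₃ * K₃ ^ 2) ≤ K₂ :=
      (le_div_iff₀ (by positivity : (0:ℝ) < Real.exp K₃ * K₃ ^ 2)).1 hlam3
    have h2a : lam * Real.exp (lam * K₃) ≤ lam * Real.exp K₃ :=
      mul_le_mul_of_nonneg_left h1 hlam.le
    have h2b : lam * Real.exp (lam * K₃) * K₃ ^ 2 ≤ lam * Real.exp K₃ * K₃ ^ 2 :=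
      mul_le_mul_of_nonneg_right h2a (by positivity)
    have h2c : lam * Real.exp K₃ * K₃ ^ 2 = lam * (Real.exp K₃ * K₃ ^ 2) := by ring
    have h2 : lam * Real.exp (lam * K₃) * K₃ ^ 2 ≤ K₂ := by
      rw [h2c] at h2b; linarith [hlam3']
    rw [sub_pos]
    have he : lam * Real.exp (lam * K₃) / (2 * K₂) * K₃ ^ 2
        = lam * Real.exp (lam * K₃) * K₃ ^ 2 / (2 * K₂) := by ring
    rw [he, div_lt_one (by positivity)]
    linarith
end

section
/- If the channel kernel Q(y|x,s) is strictly positive on a finite alphabet, i.e., Q(y|x,s) ≥ q_min > 0 for all (y,x,s), then the one-step change in the log posterior entropy is bounded: there exists a constant C_2 (depending only on q_min and the alphabet sizes) such that |log H_{t+1} − log H_t| ≤ C_2 almost surely whenever H_t > 0, where H_t is the conditional entropy of the message W given the observations up to time t and the Bayes posterior update uses kernel Q. -/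
open Finset

/-- `-(x log x) ≤ 1 - x` for `0 ≤ x`. -/
lemma aux_phi_le_one_sub (x : ℝ) (hx : 0 ≤ x) : -(x * Real.log x) ≤ 1 - x := by
  rcases eq_or_lt_of_le hx with h | h
  · simp [← h]
  · have h1 : Real.log x⁻¹ ≤ x⁻¹ - 1 := Real.log_le_sub_one_of_pos (by positivity)
    rw [Real.log_inv] at h1
    have h2 : x * (-Real.log x) ≤ x * (x⁻¹ - 1) :=
      mul_le_mul_of_nonneg_left (by linarith) hx
    have h3 : x * (x⁻¹ - 1) = 1 - x := by field_simp
    nlinarith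

/-- `log 2 * x ≤ -(x log x)` for `0 ≤ x ≤ 1/2`. -/
lemma aux_log2_le_phi (x : ℝ) (hx : 0 ≤ x) (hx2 : x ≤ 1/2) :
    Real.log 2 * x ≤ -(x * Real.log x) := by
  rcases eq_or_lt_of_le hx with h | h
  · simp [← h]
  · have h1 : Real.log x ≤ Real.log (1/2) := Real.log_le_log h hx2
    have h2 : Real.log (1/2 : ℝ) = -Real.log 2 := by
      rw [one_div, Real.log_inv]
    have h3 : x * Real.log 2 ≤ x * (-Real.log x) :=
      mul_le_mul_of_nonneg_left (by rw [h2] at h1; linarith) hx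
    nlinarith

/-- per-index entropy comparison. -/
lemma aux_ent_bound (c x y : ℝ) (hc0 : 0 < c) (hx0 : 0 ≤ x) (hy1 : y ≤ 1)
    (hlow : c * x ≤ y) (hhigh : c * y ≤ x) :
    -(y * Real.log y) ≤ (1/c) * (-(x * Real.log x) + Real.log (1/c) * x) := by
  have hy0 : 0 ≤ y := le_trans (by positivity) hlow
  rcases eq_or_lt_of_le hx0 with h | h
  · have hyz : y = 0 := le_antisymm (by nlinarith) hy0
    simp [hyz, ← h]
  · have hypos : 0 < y := lt_of_lt_of_le (by positivity) hlow
    have h1 : Real.log (c * x) ≤ Real.log y := Real.log_le_log (by positivity) hlow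
    rw [Real.log_mul hc0.ne' h.ne'] at h1
    have hA : -Real.log y ≤ -Real.log c - Real.log x := by linarith
    have hB : 0 ≤ -Real.log y := by
      have := Real.log_nonpos hy0 hy1; linarith
    have hyx : y ≤ x / c := by rw [le_div_iff₀ hc0]; linarith
    have hlog1c : Real.log (1/c) = -Real.log c := by rw [one_div, Real.log_inv]
    calc -(y * Real.log y) = y * (-Real.log y) := by ring
      _ ≤ (x/c) * (-Real.log y) := mul_le_mul_of_nonneg_right hyx hB
      _ ≤ (x/c) * (-Real.log c - Real.log x) :=
          mul_le_mul_of_nonneg_left hA (by positivity)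
      _ = (1/c) * (-(x * Real.log x) + Real.log (1/c) * x) := by rw [hlog1c]; ring

/-- Key lemma: multiplicative entropy comparison when the two probability
vectors have pointwise bounded ratios. -/
lemma aux_key {M : ℕ} (hM : 2 ≤ M) (c : ℝ) (hc0 : 0 < c) (hc1 : c ≤ 1)
    (p q : Fin M → ℝ) (hp0 : ∀ i, 0 ≤ p i) (hq0 : ∀ i, 0 ≤ q i)
    (hp1 : ∑ i, p i = 1) (hq1 : ∑ i, q i = 1)
    (hlow : ∀ i, c * p i ≤ q i) (hhigh : ∀ i, c * q i ≤ p i) :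
    -∑ i, q i * Real.log (q i) ≤
      ((1 + Real.log (1/c)) / (c * Real.log 2) + 1/c) *
        (-∑ i, p i * Real.log (p i)) := by
  have hl2 : (0:ℝ) < Real.log 2 := Real.log_pos (by norm_num)
  have hlc : 0 ≤ Real.log (1/c) := Real.log_nonneg (by rw [le_div_iff₀ hc0]; linarith)
  have pb : ∀ i, p i ≤ 1 := by
    intro i
    calc p i ≤ ∑ j, p j := Finset.single_le_sum (fun j _ => hp0 j) (Finset.mem_univ i)
      _ = 1 := hp1
  have qb : ∀ i, q i ≤ 1 := by
    intro i
    calc q i ≤ ∑ j, q j := Finset.single_le_sum (fun j _ => hq0 j) (Finset.mem_univ i)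
      _ = 1 := hq1
  -- choose the big index
  obtain ⟨i₀, hhalf⟩ : ∃ i₀ : Fin M, ∀ i, i ≠ i₀ → p i ≤ 1/2 := by
    by_cases hex : ∃ j, 1/2 < p j
    · obtain ⟨j, hj⟩ := hex
      refine ⟨j, fun i hi => ?_⟩
      have hsub : ({i, j} : Finset (Fin M)) ⊆ Finset.univ := Finset.subset_univ _
      have : p i + p j ≤ ∑ k, p k := by
        rw [← Finset.sum_pair hi]
        exact Finset.sum_le_sum_of_subset_of_nonneg hsub (fun k _ _ => hp0 k)
      rw [hp1] at this; linarith
    · push_neg at hex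
      exact ⟨⟨0, by omega⟩, fun i _ => hex i⟩
  set E := Finset.univ.erase i₀ with hE
  have splitp : ∑ i, p i * Real.log (p i)
      = p i₀ * Real.log (p i₀) + ∑ i ∈ E, p i * Real.log (p i) :=
    (Finset.add_sum_erase _ _ (Finset.mem_univ i₀)).symm
  have splitq : ∑ i, q i * Real.log (q i)
      = q i₀ * Real.log (q i₀) + ∑ i ∈ E, q i * Real.log (q i) :=
    (Finset.add_sum_erase _ _ (Finset.mem_univ i₀)).symm
  have splitq1 : q i₀ + ∑ i ∈ E, q i = 1 := by
    rw [Finset.add_sum_erase _ _ (Finset.mem_univ i₀)]; exact hq1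
  -- bound for the big index
  have h_top : -(q i₀ * Real.log (q i₀)) ≤ (1/c) * ∑ i ∈ E, p i := by
    have h1 : -(q i₀ * Real.log (q i₀)) ≤ 1 - q i₀ := aux_phi_le_one_sub _ (hq0 i₀)
    have h2 : ∑ i ∈ E, q i ≤ ∑ i ∈ E, (1/c) * p i := by
      apply Finset.sum_le_sum
      intro i _
      have h := mul_le_mul_of_nonneg_left (hhigh i) (le_of_lt (one_div_pos.mpr hc0))
      have he : (1/c) * (c * q i) = q i := by field_simp
      linarith
    rw [Finset.mul_sum]
    nlinarith
  -- bound for the rest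
  have h_rest : ∑ i ∈ E, -(q i * Real.log (q i)) ≤
      (1/c) * (∑ i ∈ E, -(p i * Real.log (p i)) + Real.log (1/c) * ∑ i ∈ E, p i) := by
    calc ∑ i ∈ E, -(q i * Real.log (q i))
        ≤ ∑ i ∈ E, (1/c) * (-(p i * Real.log (p i)) + Real.log (1/c) * p i) :=
          Finset.sum_le_sum (fun i _ =>
            aux_ent_bound c (p i) (q i) hc0 (hp0 i) (qb i) (hlow i) (hhigh i))
      _ = (1/c) * (∑ i ∈ E, -(p i * Real.log (p i)) + Real.log (1/c) * ∑ i ∈ E, p i) := by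
          rw [← Finset.mul_sum, Finset.sum_add_distrib, ← Finset.mul_sum]
  -- small probabilities are dominated by entropy
  have h_small : Real.log 2 * ∑ i ∈ E, p i ≤ ∑ i ∈ E, -(p i * Real.log (p i)) := by
    rw [Finset.mul_sum]
    apply Finset.sum_le_sum
    intro i hi
    exact aux_log2_le_phi (p i) (hp0 i) (hhalf i (Finset.ne_of_mem_erase hi))
  have h_phi_top : 0 ≤ -(p i₀ * Real.log (p i₀)) := by
    have := Real.log_nonpos (hp0 i₀) (pb i₀)
    nlinarith [hp0 i₀]
  have hsumE : ∑ i ∈ E, -(q i * Real.log (q i)) = -∑ i ∈ E, q i * Real.log (q i) := by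
    rw [Finset.sum_neg_distrib]
  have hsumEp : ∑ i ∈ E, -(p i * Real.log (p i)) = -∑ i ∈ E, p i * Real.log (p i) := by
    rw [Finset.sum_neg_distrib]
  set a := ∑ i ∈ E, p i with ha
  set b := ∑ i ∈ E, -(p i * Real.log (p i)) with hb
  have hbHp : b ≤ -∑ i, p i * Real.log (p i) := by
    rw [splitp]; rw [hb, Finset.sum_neg_distrib]; linarith
  have ha0 : 0 ≤ a := Finset.sum_nonneg (fun i _ => hp0 i)
  -- combine
  have hmain : -∑ i, q i * Real.log (q i) ≤
      (1/c) * (1 + Real.log (1/c)) * a + (1/c) * b := by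
    rw [splitq]
    have := h_rest
    rw [hsumE] at this
    nlinarith
  have hcoef : 0 ≤ (1 + Real.log (1/c)) / (c * Real.log 2) := by positivity
  have hstep : (1/c) * (1 + Real.log (1/c)) * a ≤
      (1 + Real.log (1/c)) / (c * Real.log 2) * (-∑ i, p i * Real.log (p i)) := by
    have h1 : Real.log 2 * a ≤ -∑ i, p i * Real.log (p i) := le_trans h_small hbHp
    have h2 : (1 + Real.log (1/c)) / (c * Real.log 2) * (Real.log 2 * a) ≤
        (1 + Real.log (1/c)) / (c * Real.log 2) * (-∑ i, p i * Real.log (p i)) :=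
      mul_le_mul_of_nonneg_left h1 hcoef
    have h3 : (1 + Real.log (1/c)) / (c * Real.log 2) * (Real.log 2 * a)
        = (1/c) * (1 + Real.log (1/c)) * a := by
      field_simp
    linarith
  have hstep2 : (1/c) * b ≤ (1/c) * (-∑ i, p i * Real.log (p i)) :=
    mul_le_mul_of_nonneg_left hbHp (by positivity)
  calc -∑ i, q i * Real.log (q i)
      ≤ (1/c) * (1 + Real.log (1/c)) * a + (1/c) * b := hmain
    _ ≤ (1 + Real.log (1/c)) / (c * Real.log 2) * (-∑ i, p i * Real.log (p i))
        + (1/c) * (-∑ i, p i * Real.log (p i)) := by linarith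
    _ = ((1 + Real.log (1/c)) / (c * Real.log 2) + 1/c) *
        (-∑ i, p i * Real.log (p i)) := by ring

/-- If the Bayes update likelihoods are bounded in `[q_min, 1]` with `q_min > 0`,
then the one-step change of the log posterior entropy is bounded by a constant
depending only on `q_min` and the alphabet size. -/
theorem stmt11 (qmin : ℝ) (hq0 : 0 < qmin) (hq1 : qmin ≤ 1) (M : ℕ) (hM : 2 ≤ M) :
    ∃ C₂ : ℝ, ∀ (Pi : ℕ → Fin M → ℝ) (L : ℕ → Fin M → ℝ),
      (∀ i, 0 ≤ Pi 0 i) → (∑ i, Pi 0 i = 1) →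
      (∀ t i, qmin ≤ L t i ∧ L t i ≤ 1) →
      (∀ t i, Pi (t + 1) i = Pi t i * L t i / ∑ j, Pi t j * L t j) →
      ∀ t : ℕ, 0 < -∑ i, Pi t i * Real.log (Pi t i) →
        |Real.log (-∑ i, Pi (t + 1) i * Real.log (Pi (t + 1) i)) -
            Real.log (-∑ i, Pi t i * Real.log (Pi t i))| ≤ C₂ := by
  have hl2 : (0:ℝ) < Real.log 2 := Real.log_pos (by norm_num)
  have hlc : 0 ≤ Real.log (1/qmin) := Real.log_nonneg (by rw [le_div_iff₀ hq0]; linarith)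
  set K : ℝ := (1 + Real.log (1/qmin)) / (qmin * Real.log 2) + 1/qmin with hK
  have hKpos : 0 < K := by positivity
  refine ⟨Real.log K, ?_⟩
  intro Pi L h00 hs0 hL hrec t hHp
  -- probability vectors at every time
  have base : ∀ s, (∀ i, 0 ≤ Pi s i) ∧ (∑ i, Pi s i = 1) := by
    intro s
    induction s with
    | zero => exact ⟨h00, hs0⟩
    | succ s ih =>
      obtain ⟨hn, hs⟩ := ih
      have hSlo : qmin ≤ ∑ j, Pi s j * L s j := by
        calc qmin = ∑ j, Pi s j * qmin := by rw [← Finset.sum_mul, hs, one_mul]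
          _ ≤ ∑ j, Pi s j * L s j :=
            Finset.sum_le_sum (fun j _ => mul_le_mul_of_nonneg_left (hL s j).1 (hn j))
      have hSpos : 0 < ∑ j, Pi s j * L s j := lt_of_lt_of_le hq0 hSlo
      constructor
      · intro i
        rw [hrec s i]
        have : 0 ≤ Pi s i * L s i := mul_nonneg (hn i) (le_trans hq0.le (hL s i).1)
        positivity
      · simp_rw [hrec s]
        rw [← Finset.sum_div, div_self hSpos.ne']
  obtain ⟨hn, hs⟩ := base t
  obtain ⟨hn', hs'⟩ := base (t + 1)
  set S := ∑ j, Pi t j * L t j with hSdef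
  have hSlo : qmin ≤ S := by
    calc qmin = ∑ j, Pi t j * qmin := by rw [← Finset.sum_mul, hs, one_mul]
      _ ≤ S := Finset.sum_le_sum (fun j _ => mul_le_mul_of_nonneg_left (hL t j).1 (hn j))
  have hShi : S ≤ 1 := by
    calc S ≤ ∑ j, Pi t j := Finset.sum_le_sum (fun j _ => by
        nlinarith [(hL t j).2, hn j, hq0.trans_le (hL t j).1])
      _ = 1 := hs
  have hSpos : 0 < S := lt_of_lt_of_le hq0 hSlo
  have hlow : ∀ i, qmin * Pi t i ≤ Pi (t+1) i := by
    intro i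
    rw [hrec t i, le_div_iff₀ hSpos]
    have h1 : qmin ≤ L t i := (hL t i).1
    nlinarith [hn i, mul_nonneg (hn i) (sub_nonneg.mpr h1),
      mul_nonneg (mul_nonneg hq0.le (hn i)) (sub_nonneg.mpr hShi)]
  have hhigh : ∀ i, qmin * Pi (t+1) i ≤ Pi t i := by
    intro i
    have h2 : L t i ≤ 1 := (hL t i).2
    have e : qmin * Pi (t+1) i = qmin * (Pi t i * L t i) / S := by rw [hrec t i]; ring
    rw [e, div_le_iff₀ hSpos]
    nlinarith [hn i, mul_nonneg (mul_nonneg hq0.le (hn i)) (sub_nonneg.mpr h2),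
      mul_nonneg (hn i) (sub_nonneg.mpr hSlo)]
  have hK1 : -∑ i, Pi (t+1) i * Real.log (Pi (t+1) i) ≤
      K * (-∑ i, Pi t i * Real.log (Pi t i)) :=
    aux_key hM qmin hq0 hq1 (Pi t) (Pi (t+1)) hn hn' hs hs' hlow hhigh
  have hK2 : -∑ i, Pi t i * Real.log (Pi t i) ≤
      K * (-∑ i, Pi (t+1) i * Real.log (Pi (t+1) i)) :=
    aux_key hM qmin hq0 hq1 (Pi (t+1)) (Pi t) hn' hn hs' hs hhigh hlow
  set Hp := -∑ i, Pi t i * Real.log (Pi t i) with hHpd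
  set Hq := -∑ i, Pi (t+1) i * Real.log (Pi (t+1) i) with hHqd
  have hQpos : 0 < Hq := by nlinarith
  rw [abs_le]
  constructor
  · have h1 : Real.log Hp ≤ Real.log (K * Hq) := Real.log_le_log hHp hK2
    rw [Real.log_mul hKpos.ne' hQpos.ne'] at h1
    linarith
  · have h1 : Real.log Hq ≤ Real.log (K * Hp) := Real.log_le_log hQpos hK1
    rw [Real.log_mul hKpos.ne' hHp.ne'] at h1
    linarith
end
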